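/- Let (T,d,ρ,u) be a plane ℝ-tree. Then for every α ∈ T×[0,1], the three sets {β ∈ T×[0,1] : β ↷ α}, {β ∈ T×[0,1] : α → β} and {β ∈ T×[0,1] : α ↷ β} are Borel subsets of T×[0,1] (with the product topology of the metric topology on T and the standard topology on [0,1]). -/

import Mathlib

open Set MeasureTheory Filter Metric

/-- The metric segment `[[x,y]]` between `x` and `y`. -/
def geoSeg {T : Type*} [MetricSpace T] (x y : T) : Set T :=
  {z | dist x z + dist z y = dist x y}

/-- `(T,d)` is an `ℝ`-tree: it is geodesic (any two points are joined by a geodesic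
segment, which is `geoSeg x y`) and loopless (this segment is the unique arc joining
`x` and `y`). -/
structure IsRTree (T : Type*) [MetricSpace T] : Prop where
  geodesic : ∀ x y : T, ∃ γ : ℝ → T, γ 0 = x ∧ γ (dist x y) = y ∧
    (∀ s ∈ Icc (0:ℝ) (dist x y), ∀ t ∈ Icc (0:ℝ) (dist x y),
      dist (γ s) (γ t) = |s - t|) ∧
    γ '' Icc (0:ℝ) (dist x y) = geoSeg x y
  loopless : ∀ x y : T, ∀ f : ℝ → T, ContinuousOn f (Icc (0:ℝ) 1) →
    InjOn f (Icc (0:ℝ) 1) → f 0 = x → f 1 = y → f '' Icc (0:ℝ) 1 = geoSeg x y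

/-- The set of connected components of `T \ {x}`. -/
def comps {T : Type*} [MetricSpace T] (x : T) : Set (Set T) :=
  {C | ∃ y, y ≠ x ∧ C = connectedComponentIn ({x}ᶜ) y}

/-- A plane `ℝ`-tree structure on the metric space `T`: `T` is a separable complete
`ℝ`-tree with a root and a balanced angle function `u`.  `cca x y` is the closest
common ancestor of `x` and `y`. -/
structure PlaneRTree (T : Type*) [MetricSpace T] where
  sep : TopologicalSpace.SeparableSpace T
  cpl : CompleteSpace T
  tree : IsRTree T
  root : T
  cca : T → T → T
  cca_mem : ∀ x y : T, cca x y ∈ geoSeg root x ∩ geoSeg root y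
  cca_max : ∀ x y : T, ∀ z ∈ geoSeg root x ∩ geoSeg root y,
    dist root z ≤ dist root (cca x y)
  u : T → T → ℝ
  u_mem : ∀ x y : T, u x y ∈ Icc (0:ℝ) 1
  u_root : ∀ x : T, u x root = 0
  u_self : ∀ x : T, u x x = 0
  u_eq_iff : ∀ x y z : T, y ≠ x → z ≠ x →
    (u x y = u x z ↔ connectedComponentIn ({x}ᶜ) y = connectedComponentIn ({x}ᶜ) z)
  balanced : ∀ x y : T, (comps x).ncard = 2 → u x y = 0 ∨ u x y = 1/2

namespace PlaneRTree

variable {T : Type*} [MetricSpace T]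

open Classical in
/-- The angle `u(x, (y,w))`: it is `u x y` if `x ≠ y`, and `w` if `x = y`. -/
noncomputable def ang (P : PlaneRTree T) (x : T) (β : T × ℝ) : ℝ :=
  if x = β.1 then β.2 else P.u x β.1

/-- `α ↷ β` : `α` is at the left of `β`. -/
def leftOf (P : PlaneRTree T) (α β : T × ℝ) : Prop :=
  P.ang (P.cca α.1 β.1) α < P.ang (P.cca α.1 β.1) β

/-- `α → β` : `β` is in front of `α`. -/
def frontOf (P : PlaneRTree T) (α β : T × ℝ) : Prop :=
  α.1 ∈ geoSeg P.root β.1 ∧ P.ang α.1 β = α.2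

/-- The contour relation `≺` : `α ≺ β` iff `α ↷ β` or `α → β`. -/
def precOf (P : PlaneRTree T) (α β : T × ℝ) : Prop :=
  P.leftOf α β ∨ P.frontOf α β

end PlaneRTree
section TreeHelpers

variable {T : Type*} [MetricSpace T]

lemma mem_geoSeg_iff {a b z : T} : z ∈ geoSeg a b ↔ dist a z + dist z b = dist a b := Iff.rfl

lemma self_mem_geoSeg_left (a b : T) : a ∈ geoSeg a b := by
  simp [mem_geoSeg_iff]

lemma self_mem_geoSeg_right (a b : T) : b ∈ geoSeg a b := by
  simp [mem_geoSeg_iff]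

lemma geoSeg_trans {a z m b : T} (h1 : z ∈ geoSeg a m) (h2 : m ∈ geoSeg a b) :
    z ∈ geoSeg a b ∧ m ∈ geoSeg z b := by
  rw [mem_geoSeg_iff] at *
  have t1 : dist z b ≤ dist z m + dist m b := dist_triangle _ _ _
  have t2 : dist a b ≤ dist a z + dist z b := dist_triangle _ _ _
  constructor
  · linarith
  · show dist z m + dist m b = dist z b
    linarith

lemma geoSeg_comm {a b z : T} (h : z ∈ geoSeg a b) : z ∈ geoSeg b a := by
  rw [mem_geoSeg_iff] at *
  rw [dist_comm b z, dist_comm z a, dist_comm b a]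
  linarith

lemma IsRTree.good_geo (h : IsRTree T) (a b : T) :
    ∃ γ : ℝ → T, γ 0 = a ∧ γ (dist a b) = b ∧
      (∀ s ∈ Icc (0:ℝ) (dist a b), ∀ t ∈ Icc (0:ℝ) (dist a b), dist (γ s) (γ t) = |s - t|) ∧
      γ '' Icc (0:ℝ) (dist a b) = geoSeg a b ∧
      (∀ s ∈ Icc (0:ℝ) (dist a b), geoSeg a (γ s) = γ '' Icc 0 s) ∧
      ContinuousOn γ (Icc (0:ℝ) (dist a b)) ∧
      (∀ s ∈ Icc (0:ℝ) (dist a b), dist a (γ s) = s) := by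
  obtain ⟨γ, h0, hd, hiso, him⟩ := h.geodesic a b
  have hcont : ContinuousOn γ (Icc 0 (dist a b)) := by
    apply LipschitzOnWith.continuousOn (K := 1)
    apply LipschitzOnWith.of_dist_le_mul
    intro u hu t ht
    rw [hiso u hu t ht, NNReal.coe_one, one_mul, Real.dist_eq]
  have hpar : ∀ s ∈ Icc (0:ℝ) (dist a b), dist a (γ s) = s := by
    intro s hs
    rw [← h0, hiso 0 ⟨le_rfl, dist_nonneg⟩ s hs, abs_of_nonpos (by linarith [hs.1])]
    ring
  refine ⟨γ, h0, hd, hiso, him, ?_, hcont, hpar⟩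
  intro s hs
  rcases eq_or_lt_of_le hs.1 with hs0 | hs0
  · rw [show γ '' Icc (0:ℝ) s = {a} by rw [← hs0, Icc_self, image_singleton, h0]]
    ext z
    simp only [mem_geoSeg_iff, mem_singleton_iff, ← hs0, h0]
    constructor
    · intro hz
      have h1 : dist a z = 0 := by
        have := dist_nonneg (x := a) (y := z)
        have := dist_nonneg (x := z) (y := a)
        have := dist_self a
        linarith
      exact (dist_eq_zero.1 h1).symm
    · rintro rfl; simp
  · set f : ℝ → T := fun t => γ (t * s) with hf
    have hmaps : ∀ t ∈ Icc (0:ℝ) 1, t * s ∈ Icc 0 (dist a b) := by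
      intro t ht
      constructor
      · exact mul_nonneg ht.1 hs0.le
      · calc t * s ≤ 1 * s := by nlinarith [ht.2, hs0.le]
          _ = s := one_mul s
          _ ≤ dist a b := hs.2
    have hfc : ContinuousOn f (Icc 0 1) := by
      apply hcont.comp (Continuous.continuousOn (by continuity))
      intro t ht; exact hmaps t ht
    have hinj : InjOn f (Icc 0 1) := by
      intro t ht t' ht' he
      have hds : dist (f t) (f t') = |t * s - t' * s| :=
        hiso _ (hmaps t ht) _ (hmaps t' ht')
      rw [he, dist_self] at hds
      have : t * s = t' * s := by
        have := abs_eq_zero.1 hds.symm; linarith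
      exact mul_right_cancel₀ (ne_of_gt hs0) this
    have hle := h.loopless a (γ s) f hfc hinj (by simp [hf, h0]) (by simp [hf])
    rw [← hle]
    ext z
    simp only [mem_image, hf]
    constructor
    · rintro ⟨t, ht, rfl⟩
      exact ⟨t * s, ⟨mul_nonneg ht.1 hs0.le, by nlinarith [ht.2]⟩, rfl⟩
    · rintro ⟨u, hu, rfl⟩
      exact ⟨u / s, ⟨div_nonneg hu.1 hs0.le, by rw [div_le_one hs0]; exact hu.2⟩,
        by rw [div_mul_cancel₀ _ (ne_of_gt hs0)]⟩

/-- On a geodesic segment, points are ordered by distance from the left endpoint. -/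
lemma IsRTree.geoSeg_ord (h : IsRTree T) {a b z z' : T} (hz : z ∈ geoSeg a b)
    (hz' : z' ∈ geoSeg a b) (hle : dist a z ≤ dist a z') : z ∈ geoSeg a z' := by
  obtain ⟨γ, h0, hd, hiso, him, _, _, hpar⟩ := h.good_geo a b
  rw [← him] at hz hz'
  obtain ⟨t, ht, rfl⟩ := hz
  obtain ⟨t', ht', rfl⟩ := hz'
  have e1 : dist a (γ t) = t := hpar t ht
  have e2 : dist a (γ t') = t' := hpar t' ht'
  have htt : t ≤ t' := by rw [e1] at hle; rw [e2] at hle; exact hle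
  rw [mem_geoSeg_iff, e1, e2, hiso t ht t' ht', abs_of_nonpos (by linarith)]
  ring

lemma IsRTree.geoSeg_eq_of_dist (h : IsRTree T) {a b z z' : T} (hz : z ∈ geoSeg a b)
    (hz' : z' ∈ geoSeg a b) (he : dist a z = dist a z') : z = z' := by
  have h1 := h.geoSeg_ord hz hz' he.le
  rw [mem_geoSeg_iff] at h1
  have : dist z z' = 0 := by linarith
  exact dist_eq_zero.1 this

lemma IsRTree.median (h : IsRTree T) (c a b : T) :
    ∃ m : T, m ∈ geoSeg c a ∧ m ∈ geoSeg c b ∧ m ∈ geoSeg a b ∧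
      ∀ z, z ∈ geoSeg c a → z ∈ geoSeg c b → z ∈ geoSeg c m := by
  obtain ⟨γa, ha0, had, haiso, haim, hainit, haco, hapar⟩ := h.good_geo c a
  obtain ⟨γb, hb0, hbd, hbiso, hbim, hbinit, hbco, hbpar⟩ := h.good_geo c b
  set da := dist c a with hda
  set db := dist c b with hdb
  have hda0 : 0 ≤ da := dist_nonneg
  have hdb0 : 0 ≤ db := dist_nonneg
  set I : Set ℝ := {t | t ∈ Icc 0 (min da db) ∧ γa t = γb t} with hIdef
  have hIne : (0:ℝ) ∈ I := ⟨⟨le_rfl, le_min hda0 hdb0⟩, by rw [ha0, hb0]⟩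
  have hIbdd : BddAbove I := ⟨min da db, fun t ht => ht.1.2⟩
  have hIclosed : IsClosed I := by
    have heq : I = Icc 0 (min da db) ∩ ((fun t => dist (γa t) (γb t)) ⁻¹' {0}) := by
      ext t
      simp only [hIdef, mem_setOf_eq, mem_inter_iff, mem_preimage, mem_singleton_iff,
        dist_eq_zero]
    have hco : ContinuousOn (fun t => dist (γa t) (γb t)) (Icc 0 (min da db)) :=
      continuous_dist.comp_continuousOn
        ((haco.mono (Icc_subset_Icc_right (min_le_left _ _))).prodMk
          (hbco.mono (Icc_subset_Icc_right (min_le_right _ _))))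
    rw [heq]
    exact hco.preimage_isClosed_of_isClosed isClosed_Icc isClosed_singleton
  set tm := sSup I with htmdef
  have htmI : tm ∈ I := hIclosed.csSup_mem ⟨0, hIne⟩ hIbdd
  have htm0 : 0 ≤ tm := le_csSup hIbdd hIne
  have htma : tm ≤ da := le_trans htmI.1.2 (min_le_left _ _)
  have htmb : tm ≤ db := le_trans htmI.1.2 (min_le_right _ _)
  set m := γa tm with hmdef
  have hmb : m = γb tm := htmI.2
  have hcm : dist c m = tm := hapar tm ⟨htm0, htma⟩
  have hma : dist m a = da - tm := by
    rw [hmdef, ← had, haiso tm ⟨htm0, htma⟩ da ⟨hda0, le_rfl⟩, abs_of_nonpos (by linarith)]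
    ring
  have hmbd : dist m b = db - tm := by
    rw [hmb, ← hbd, hbiso tm ⟨htm0, htmb⟩ db ⟨hdb0, le_rfl⟩, abs_of_nonpos (by linarith)]
    ring
  have hmca : m ∈ geoSeg c a := by rw [mem_geoSeg_iff, hcm, hma]; ring
  have hmcb : m ∈ geoSeg c b := by rw [mem_geoSeg_iff, hcm, hmbd]; ring
  have hmax : ∀ z, z ∈ geoSeg c a → z ∈ geoSeg c b → z ∈ geoSeg c m := by
    intro z hza hzb
    rw [← haim] at hza
    rw [← hbim] at hzb
    obtain ⟨s, hs, rfl⟩ := hza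
    obtain ⟨s', hs', he'⟩ := hzb
    have e2 : dist c (γb s') = s' := hbpar s' hs'
    rw [he'] at e2
    have hss' : s = s' := by rw [← e2, hapar s hs]
    rw [← hss'] at he'
    have hsI : s ∈ I := ⟨⟨hs.1, le_min hs.2 (by rw [hss']; exact hs'.2)⟩, he'.symm⟩
    have hstm : s ≤ tm := le_csSup hIbdd hsI
    rw [mem_geoSeg_iff, hapar s hs, hcm]
    rw [hmdef, haiso s hs tm ⟨htm0, htma⟩, abs_of_nonpos (by linarith)]
    ring
  refine ⟨m, hmca, hmcb, ?_, hmax⟩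
  -- remains : m ∈ geoSeg a b
  rcases eq_or_lt_of_le htma with hea | hla
  · -- tm = da, m = a
    have : m = a := by rw [hmdef, hea, had]
    rw [this, mem_geoSeg_iff, dist_self]
    ring
  rcases eq_or_lt_of_le htmb with heb | hlb
  · have : m = b := by rw [hmb, heb, hbd]
    rw [this, mem_geoSeg_iff, dist_self]
    ring
  -- main case: build the concatenated injective path
  set la := da - tm with hladef
  set lb := db - tm with hlbdef
  have hla0 : 0 < la := by simp only [hladef]; linarith
  have hlb0 : 0 < lb := by simp only [hlbdef]; linarith
  set l := la + lb with hldef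
  have hl0 : 0 < l := by linarith
  set c0 := la / l with hc0def
  have hc00 : 0 < c0 := div_pos hla0 hl0
  have hc01 : c0 < 1 := by rw [hc0def, div_lt_one hl0]; linarith
  set A : ℝ → ℝ := fun t => max tm (min da (da - t * l)) with hAdef
  set B : ℝ → ℝ := fun t => max tm (min db (tm + t * l - la)) with hBdef
  have hAval : ∀ t : ℝ, 0 ≤ t → t ≤ c0 → A t = da - t * l := by
    intro t ht0 htc
    have h1 : t * l ≤ la := (le_div_iff₀ hl0).1 htc
    have h2 : 0 ≤ t * l := mul_nonneg ht0 hl0.le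
    have e1 := hladef
    have e2 := hlbdef
    have e3 := hldef
    rw [hAdef]
    simp only
    rw [min_eq_right (by linarith), max_eq_right (by linarith)]
  have hBval : ∀ t : ℝ, c0 ≤ t → t ≤ 1 → B t = tm + t * l - la := by
    intro t htc ht1
    have h1 : la ≤ t * l := (div_le_iff₀ hl0).1 htc
    have h2 : t * l ≤ l := by nlinarith
    have e1 := hladef
    have e2 := hlbdef
    have e3 := hldef
    rw [hBdef]
    simp only
    rw [min_eq_right (by linarith), max_eq_right (by linarith)]
  have hArange : ∀ t : ℝ, A t ∈ Icc 0 da := by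
    intro t
    constructor
    · exact le_trans htm0 (le_max_left _ _)
    · exact max_le htma (min_le_left _ _)
  have hBrange : ∀ t : ℝ, B t ∈ Icc 0 db := by
    intro t
    constructor
    · exact le_trans htm0 (le_max_left _ _)
    · exact max_le htmb (min_le_left _ _)
  have hAcont : Continuous A :=
    Continuous.max continuous_const (Continuous.min continuous_const
      (continuous_const.sub (continuous_id.mul continuous_const)))
  have hBcont : Continuous B :=
    Continuous.max continuous_const (Continuous.min continuous_const
      ((continuous_const.add (continuous_id.mul continuous_const)).sub continuous_const))
  classical
  set f : ℝ → T := fun t => if t ≤ c0 then γa (A t) else γb (B t) with hfdef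
  have hAc0 : A c0 = tm := by rw [hAval c0 hc00.le le_rfl, hc0def, div_mul_cancel₀ _ hl0.ne']; ring
  have hBc0 : B c0 = tm := by rw [hBval c0 le_rfl hc01.le, hc0def, div_mul_cancel₀ _ hl0.ne']; ring
  have hfcont : Continuous f := by
    apply continuous_if_le continuous_id continuous_const
    · exact ((haco.comp hAcont.continuousOn) (fun t _ => hArange t)).mono (subset_univ _)
    · exact ((hbco.comp hBcont.continuousOn) (fun t _ => hBrange t)).mono (subset_univ _)
    · intro t ht
      simp only [id_eq] at ht
      rw [ht, hAc0, hBc0, ← hmdef, hmb]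
  have hmixed : ∀ t t' : ℝ, t ∈ Icc (0:ℝ) 1 → t' ∈ Icc (0:ℝ) 1 → t ≤ c0 → ¬ t' ≤ c0 →
      γa (A t) = γb (B t') → False := by
    intro t t' ht ht' htc ht'c he
    push_neg at ht'c
    set s := da - t * l with hsdef
    set s' := tm + t' * l - la with hs'def
    rw [hAval t ht.1 htc, hBval t' ht'c.le ht'.2, ← hsdef, ← hs'def] at he
    have hsr : s ∈ Icc 0 da := by
      rw [hsdef, ← hAval t ht.1 htc]; exact hArange t
    have hs'r : s' ∈ Icc 0 db := by
      rw [hs'def, ← hBval t' ht'c.le ht'.2]; exact hBrange t'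
    have hss' : s = s' := by
      have e1 : dist c (γa s) = s := hapar s hsr
      have e2 : dist c (γb s') = s' := hbpar s' hs'r
      rw [← he, e1] at e2
      exact e2
    have hs'tm : tm < s' := by
      have : la < t' * l := (div_lt_iff₀ hl0).1 ht'c
      simp only [hs'def]; linarith
    have hsI : s ∈ I := by
      refine ⟨⟨hsr.1, le_min hsr.2 ?_⟩, ?_⟩
      · rw [hss']; exact hs'r.2
      · rw [hss'] at he ⊢; exact he
    have := le_csSup hIbdd hsI
    rw [hss'] at this
    linarith
  have hinj : InjOn f (Icc 0 1) := by
    intro t ht t' ht' he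
    by_cases h1 : t ≤ c0 <;> by_cases h2 : t' ≤ c0
    · rw [hfdef] at he
      simp only [if_pos h1, if_pos h2] at he
      rw [hAval t ht.1 h1, hAval t' ht'.1 h2] at he
      have hr1 : da - t * l ∈ Icc 0 da := by rw [← hAval t ht.1 h1]; exact hArange t
      have hr2 : da - t' * l ∈ Icc 0 da := by rw [← hAval t' ht'.1 h2]; exact hArange t'
      have := haiso _ hr1 _ hr2
      rw [he, dist_self] at this
      have h0 := abs_eq_zero.1 this.symm
      have : t * l = t' * l := by linarith [h0]
      exact mul_right_cancel₀ hl0.ne' this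
    · exfalso
      rw [hfdef] at he
      simp only [if_pos h1, if_neg h2] at he
      exact hmixed t t' ht ht' h1 h2 he
    · exfalso
      rw [hfdef] at he
      simp only [if_neg h1, if_pos h2] at he
      exact hmixed t' t ht' ht h2 h1 he.symm
    · rw [hfdef] at he
      simp only [if_neg h1, if_neg h2] at he
      push_neg at h1 h2
      rw [hBval t h1.le ht.2, hBval t' h2.le ht'.2] at he
      have hr1 : tm + t * l - la ∈ Icc 0 db := by rw [← hBval t h1.le ht.2]; exact hBrange t
      have hr2 : tm + t' * l - la ∈ Icc 0 db := by rw [← hBval t' h2.le ht'.2]; exact hBrange t'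
      have := hbiso _ hr1 _ hr2
      rw [he, dist_self] at this
      have h0 := abs_eq_zero.1 this.symm
      have : t * l = t' * l := by linarith [h0]
      exact mul_right_cancel₀ hl0.ne' this
  have hf0 : f 0 = a := by
    rw [hfdef]
    simp only [if_pos hc00.le]
    rw [hAval 0 le_rfl hc00.le]
    simp only [zero_mul, sub_zero]
    exact had
  have hf1 : f 1 = b := by
    rw [hfdef]
    simp only [if_neg (not_le.2 hc01)]
    rw [hBval 1 hc01.le le_rfl]
    rw [show tm + 1 * l - la = db by simp only [hldef, hladef, hlbdef]; ring]
    exact hbd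
  have hseg := h.loopless a b f hfcont.continuousOn hinj hf0 hf1
  rw [← hseg]
  refine ⟨c0, ⟨hc00.le, hc01.le⟩, ?_⟩
  rw [hfdef]
  simp only [if_pos (le_refl c0)]
  rw [hAc0]
lemma IsRTree.isPreconnected_geoSeg (h : IsRTree T) (a b : T) :
    IsPreconnected (geoSeg a b) := by
  obtain ⟨γ, h0, hd, hiso, him, hinit, hcont, hpar⟩ := h.good_geo a b
  rw [← him]
  exact (isPreconnected_Icc).image γ hcont

lemma IsRTree.geoSeg_self (h : IsRTree T) {a z : T} (hz : z ∈ geoSeg a a) : z = a := by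
  rw [mem_geoSeg_iff, dist_self] at hz
  have h1 : dist a z = 0 := by
    have := dist_nonneg (x := a) (y := z)
    have := dist_nonneg (x := z) (y := a)
    linarith
  exact (dist_eq_zero.1 h1).symm

/-- Local stability of the relation `q ∈ [[a,w]]` in `w`. -/
lemma IsRTree.mem_geoSeg_stable (h : IsRTree T) {q a w w' : T}
    (hww' : dist w w' < dist q w / 2) :
    q ∈ geoSeg a w ↔ q ∈ geoSeg a w' := by
  obtain ⟨m, hm1, hm2, hm3, -⟩ := h.median a w w'
  have hwm : dist w m ≤ dist w w' := by
    rw [mem_geoSeg_iff] at hm3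
    linarith [dist_nonneg (x := m) (y := w')]
  constructor
  · intro hq
    have hord : q ∈ geoSeg a m := by
      apply h.geoSeg_ord hq hm1
      rw [mem_geoSeg_iff] at hq hm1
      have := dist_comm w m
      linarith [dist_nonneg (x := q) (y := w)]
    exact (geoSeg_trans hord hm2).1
  · intro hq
    have hqw' : dist q w / 2 < dist q w' := by
      have := dist_triangle q w w'
      have := dist_triangle q w' w
      linarith [dist_comm w w']
    have hmw' : dist m w' ≤ dist w w' := by
      rw [mem_geoSeg_iff] at hm3
      linarith [dist_nonneg (x := w) (y := m)]
    have hord : q ∈ geoSeg a m := by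
      apply h.geoSeg_ord hq hm2
      rw [mem_geoSeg_iff] at hq hm2
      linarith [dist_nonneg (x := q) (y := w)]
    exact (geoSeg_trans hord hm1).1

lemma IsRTree.isOpen_notMemSide (h : IsRTree T) (q a : T) :
    IsOpen {w : T | w ≠ q ∧ q ∉ geoSeg a w} := by
  rw [Metric.isOpen_iff]
  rintro w ⟨hwq, hq⟩
  refine ⟨dist q w / 2, half_pos (dist_pos.2 hwq.symm), ?_⟩
  intro w' hw'
  rw [mem_ball] at hw'
  have hww' : dist w w' < dist q w / 2 := by rw [dist_comm]; exact hw'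
  constructor
  · intro hq'
    rw [hq'] at hw'
    linarith [dist_nonneg (x := q) (y := w)]
  · intro hmem
    exact hq ((h.mem_geoSeg_stable hww').2 hmem)

lemma IsRTree.isOpen_memSide (h : IsRTree T) (q a : T) :
    IsOpen {w : T | w ≠ q ∧ q ∈ geoSeg a w} := by
  rw [Metric.isOpen_iff]
  rintro w ⟨hwq, hq⟩
  refine ⟨dist q w / 2, half_pos (dist_pos.2 hwq.symm), ?_⟩
  intro w' hw'
  rw [mem_ball] at hw'
  have hww' : dist w w' < dist q w / 2 := by rw [dist_comm]; exact hw'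
  constructor
  · intro hq'
    rw [hq'] at hw'
    linarith [dist_nonneg (x := q) (y := w)]
  · exact (h.mem_geoSeg_stable hww').1 hq

lemma IsRTree.connectedComponentIn_eq_side (h : IsRTree T) {q a : T} (ha : a ≠ q) :
    connectedComponentIn {q}ᶜ a = {w : T | w ≠ q ∧ q ∉ geoSeg a w} := by
  set U := {w : T | w ≠ q ∧ q ∉ geoSeg a w} with hU
  set V := {w : T | w ≠ q ∧ q ∈ geoSeg a w} with hV
  have haU : a ∈ U := by
    refine ⟨ha, fun hmem => ?_⟩
    exact ha (h.geoSeg_self hmem).symm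
  have hUconn : IsPreconnected U := by
    apply isPreconnected_of_forall a
    intro w hw
    refine ⟨geoSeg a w, ?_, self_mem_geoSeg_left a w, self_mem_geoSeg_right a w,
      h.isPreconnected_geoSeg a w⟩
    intro p hp
    constructor
    · intro hpq
      rw [hpq] at hp
      exact hw.2 hp
    · intro hqp
      exact hw.2 (geoSeg_trans hqp hp).1
  have hsub : U ⊆ {q}ᶜ := fun w hw => hw.1
  apply Subset.antisymm
  · apply IsPreconnected.subset_left_of_subset_union (h.isOpen_notMemSide q a)
      (h.isOpen_memSide q a)
    · rw [Set.disjoint_left]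
      rintro w ⟨hw1, hw2⟩ ⟨hw3, hw4⟩
      exact hw2 hw4
    · intro w hw
      have hwq : w ≠ q := connectedComponentIn_subset {q}ᶜ a hw
      by_cases hmem : q ∈ geoSeg a w
      · exact Or.inr ⟨hwq, hmem⟩
      · exact Or.inl ⟨hwq, hmem⟩
    · exact ⟨a, mem_connectedComponentIn ha, haU⟩
    · exact isPreconnected_connectedComponentIn
  · exact hUconn.subset_connectedComponentIn haU hsub

namespace PlaneRTree

variable (P : PlaneRTree T)

lemma u_eq_iff_geo {q y z : T} (hy : y ≠ q) (hz : z ≠ q) :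
    P.u q y = P.u q z ↔ q ∉ geoSeg y z := by
  rw [P.u_eq_iff q y z hy hz]
  constructor
  · intro hcc
    have hzmem : z ∈ connectedComponentIn {q}ᶜ y := by
      rw [hcc]
      exact mem_connectedComponentIn hz
    rw [P.tree.connectedComponentIn_eq_side hy] at hzmem
    exact hzmem.2
  · intro hq
    have hzmem : z ∈ connectedComponentIn {q}ᶜ y := by
      rw [P.tree.connectedComponentIn_eq_side hy]
      exact ⟨hz, hq⟩
    exact (connectedComponentIn_eq hzmem).symm ▸ rfl

lemma cca_spec (x y : T) :
    P.cca x y ∈ geoSeg P.root x ∧ P.cca x y ∈ geoSeg P.root y ∧ P.cca x y ∈ geoSeg x y ∧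
    ∀ z, z ∈ geoSeg P.root x → z ∈ geoSeg P.root y → z ∈ geoSeg P.root (P.cca x y) := by
  obtain ⟨m, hm1, hm2, hm3, hmax⟩ := P.tree.median P.root x y
  have h1 := P.cca_mem x y
  have hcm : P.cca x y = m := by
    apply P.tree.geoSeg_eq_of_dist h1.1 hm1
    have hle1 : dist P.root (P.cca x y) ≤ dist P.root m := by
      have := hmax _ h1.1 h1.2
      rw [mem_geoSeg_iff] at this
      linarith [dist_nonneg (x := P.cca x y) (y := m)]
    have hle2 := P.cca_max x y m ⟨hm1, hm2⟩
    linarith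
  rw [hcm]
  exact ⟨hm1, hm2, hm3, hmax⟩

lemma cca_comm (x y : T) : P.cca x y = P.cca y x := by
  have h1 := P.cca_mem x y
  have h2 := P.cca_mem y x
  apply P.tree.geoSeg_eq_of_dist h1.1 h2.2
  have hle1 := P.cca_max y x (P.cca x y) ⟨h1.2, h1.1⟩
  have hle2 := P.cca_max x y (P.cca y x) ⟨h2.2, h2.1⟩
  linarith

lemma cca_of_mem_spine {x y : T} (hy : y ∈ geoSeg P.root x) : P.cca x y = y := by
  have h1 := P.cca_mem x y
  have hyy : y ∈ geoSeg P.root y := self_mem_geoSeg_right _ _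
  apply P.tree.geoSeg_eq_of_dist h1.2 hyy
  have hle1 : dist P.root (P.cca x y) ≤ dist P.root y := by
    have := h1.2
    rw [mem_geoSeg_iff] at this
    linarith [dist_nonneg (x := P.cca x y) (y := y)]
  have hle2 := P.cca_max x y y ⟨hy, hyy⟩
  linarith

end PlaneRTree
lemma IsRTree.isClosed_geoSeg (h : IsRTree T) (a b : T) : IsClosed (geoSeg a b) := by
  obtain ⟨γ, h0, hd, hiso, him, hinit, hcont, hpar⟩ := h.good_geo a b
  rw [← him]
  exact (isCompact_Icc.image_of_continuousOn hcont).isClosed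

namespace PlaneRTree

variable (P : PlaneRTree T)

/-- The set of branch-like points on the spine where `u y x ≠ 1/2` is countable. -/
lemma countable_bad (x : T) :
    {y | y ∈ geoSeg P.root x ∧ y ≠ x ∧ P.u y x ≠ 1/2}.Countable := by
  haveI := P.sep
  set ρ := P.root with hρ
  set S := geoSeg ρ x with hS
  set E := {y | y ∈ S ∧ y ≠ x ∧ P.u y x ≠ 1/2} with hE
  have hsub : E ⊆ insert ρ (E \ {ρ}) := by
    intro y hy
    by_cases hyρ : y = ρ
    · exact Or.inl hyρ
    · exact Or.inr ⟨hy, hyρ⟩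
  apply Countable.mono hsub
  apply Countable.insert
  have key : ∀ y ∈ E \ {ρ}, ∃ W : Set T, IsOpen W ∧ W.Nonempty ∧
      ∀ w' ∈ W, w' ≠ y ∧ y ∈ geoSeg ρ w' ∧ y ∈ geoSeg x w' := by
    rintro y ⟨⟨hyS, hyx, hu⟩, hyρ⟩
    rw [mem_singleton_iff] at hyρ
    have hρy : ρ ≠ y := fun hh => hyρ hh.symm
    have hxy : x ≠ y := fun hh => hyx hh.symm
    have hux0 : P.u y x ≠ 0 := by
      intro h0
      have h1 : P.u y x = P.u y ρ := by rw [h0, P.u_root y]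
      rw [P.u_eq_iff_geo hxy hρy] at h1
      exact h1 (geoSeg_comm hyS)
    have hncard : (comps y).ncard ≠ 2 := by
      intro h2
      rcases P.balanced y x h2 with h0 | h12
      exacts [hux0 h0, hu h12]
    have hCρ : connectedComponentIn {y}ᶜ ρ ∈ comps y := ⟨ρ, hρy, rfl⟩
    have hCx : connectedComponentIn {y}ᶜ x ∈ comps y := ⟨x, hxy, rfl⟩
    have hCne : connectedComponentIn {y}ᶜ ρ ≠ connectedComponentIn {y}ᶜ x := by
      intro heq
      have hx1 : x ∈ connectedComponentIn {y}ᶜ x := mem_connectedComponentIn hxy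
      rw [← heq, P.tree.connectedComponentIn_eq_side hρy] at hx1
      exact hx1.2 hyS
    obtain ⟨C, hC, hC1, hC2⟩ : ∃ C ∈ comps y,
        C ≠ connectedComponentIn {y}ᶜ ρ ∧ C ≠ connectedComponentIn {y}ᶜ x := by
      by_contra hcon
      push_neg at hcon
      have hsub2 : comps y ⊆ {connectedComponentIn {y}ᶜ ρ, connectedComponentIn {y}ᶜ x} := by
        intro C hCmem
        by_cases h1 : C = connectedComponentIn {y}ᶜ ρ
        · exact Or.inl h1
        · exact Or.inr (hcon C hCmem h1)
      have heq2 : comps y = {connectedComponentIn {y}ᶜ ρ, connectedComponentIn {y}ᶜ x} := by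
        apply Subset.antisymm hsub2
        rintro C (rfl | rfl)
        exacts [hCρ, hCx]
      rw [heq2, Set.ncard_pair hCne] at hncard
      exact hncard rfl
    obtain ⟨w₀, hw₀y, rfl⟩ := hC
    refine ⟨connectedComponentIn {y}ᶜ w₀, ?_, ?_, ?_⟩
    · rw [P.tree.connectedComponentIn_eq_side hw₀y]
      exact P.tree.isOpen_notMemSide y w₀
    · exact ⟨w₀, mem_connectedComponentIn hw₀y⟩
    · intro w' hw'
      have hcceq : connectedComponentIn {y}ᶜ w₀ = connectedComponentIn {y}ᶜ w' :=
        connectedComponentIn_eq hw'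
      have hw'y : w' ≠ y := connectedComponentIn_subset {y}ᶜ w₀ hw'
      refine ⟨hw'y, ?_, ?_⟩
      · by_contra hnmem
        have : w' ∈ connectedComponentIn {y}ᶜ ρ := by
          rw [P.tree.connectedComponentIn_eq_side hρy]
          exact ⟨hw'y, hnmem⟩
        exact hC1 (hcceq.trans (connectedComponentIn_eq this).symm)
      · by_contra hnmem
        have : w' ∈ connectedComponentIn {y}ᶜ x := by
          rw [P.tree.connectedComponentIn_eq_side hxy]
          exact ⟨hw'y, hnmem⟩
        exact hC2 (hcceq.trans (connectedComponentIn_eq this).symm)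
  choose! W hWo hWne hWp using key
  have hdisj : (E \ {ρ}).PairwiseDisjoint W := by
    intro y hy y' hy' hne
    rw [Function.onFun, Set.disjoint_left]
    intro w hwW hwW'
    apply hne
    obtain ⟨-, h1, h2⟩ := hWp y hy w hwW
    obtain ⟨-, h3, h4⟩ := hWp y' hy' w hwW'
    rw [mem_geoSeg_iff] at h1 h2 h3 h4
    have hyS := hy.1.1
    have hy'S := hy'.1.1
    have hySm := hyS; have hy'Sm := hy'S
    rw [hS, mem_geoSeg_iff] at hySm hy'Sm
    apply P.tree.geoSeg_eq_of_dist hyS hy'S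
    have c1 := dist_comm x y
    have c2 := dist_comm x y'
    linarith
  exact hdisj.countable_of_isOpen (fun y hy => hWo y hy) (fun y hy => hWne y hy)

lemma not_mem_spine_near {x y y' : T} (hy : y ∉ geoSeg P.root x)
    (hd : dist y y' < infDist y (geoSeg P.root x) / 2) : y' ∉ geoSeg P.root x := by
  intro hmem
  have h1 : infDist y (geoSeg P.root x) ≤ dist y y' := by
    calc infDist y (geoSeg P.root x) ≤ infDist y' (geoSeg P.root x) + dist y y' :=
          infDist_le_infDist_add_dist
      _ ≤ 0 + dist y y' := by
          have : infDist y' (geoSeg P.root x) ≤ dist y' y' := infDist_le_dist_of_mem hmem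
          rw [dist_self] at this
          linarith
      _ = dist y y' := by ring
  have h2 : 0 < infDist y (geoSeg P.root x) :=
    ((P.tree.isClosed_geoSeg P.root x).notMem_iff_infDist_pos
      ⟨x, self_mem_geoSeg_right _ _⟩).1 hy
  linarith

lemma cca_locally_const (x : T) {y y' : T} (hy : y ∉ geoSeg P.root x)
    (hd : dist y y' < infDist y (geoSeg P.root x) / 2) : P.cca x y' = P.cca x y := by
  set ρ := P.root with hρ
  set S := geoSeg ρ x with hSdef
  have hr : 0 < infDist y S :=
    ((P.tree.isClosed_geoSeg ρ x).notMem_iff_infDist_pos ⟨x, self_mem_geoSeg_right _ _⟩).1 hy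
  obtain ⟨hm1, hm2, hm3, -⟩ := P.cca_spec y y'
  set m := P.cca y y' with hm
  have hym : dist y m ≤ dist y y' := by
    rw [mem_geoSeg_iff] at hm3
    linarith [dist_nonneg (x := m) (y := y')]
  have hy'm : dist y' m ≤ dist y y' := by
    rw [mem_geoSeg_iff] at hm3
    linarith [dist_nonneg (x := y) (y := m), dist_comm m y']
  have hmS : m ∉ S := by
    intro hmem
    have := infDist_le_dist_of_mem (x := y) hmem
    linarith
  obtain ⟨hq1, hq2, -, -⟩ := P.cca_spec x y
  obtain ⟨hq'1, hq'2, -, -⟩ := P.cca_spec x y'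
  have hsegsub : ∀ z : T, z ∈ geoSeg ρ x → geoSeg ρ z ⊆ S := by
    intro z hz p hp
    exact (geoSeg_trans hp hz).1
  have step1 : P.cca x y ∈ geoSeg ρ y' := by
    have hle : dist ρ (P.cca x y) ≤ dist ρ m := by
      by_contra hlt
      push_neg at hlt
      have : m ∈ geoSeg ρ (P.cca x y) := P.tree.geoSeg_ord hm1 hq2 hlt.le
      exact hmS (hsegsub _ hq1 this)
    have : P.cca x y ∈ geoSeg ρ m := P.tree.geoSeg_ord hq2 hm1 hle
    exact (geoSeg_trans this hm2).1
  have step2 : P.cca x y' ∈ geoSeg ρ y := by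
    have hle : dist ρ (P.cca x y') ≤ dist ρ m := by
      by_contra hlt
      push_neg at hlt
      have : m ∈ geoSeg ρ (P.cca x y') := P.tree.geoSeg_ord hm2 hq'2 hlt.le
      exact hmS (hsegsub _ hq'1 this)
    have : P.cca x y' ∈ geoSeg ρ m := P.tree.geoSeg_ord hq'2 hm2 hle
    exact (geoSeg_trans this hm1).1
  have hle1 : dist ρ (P.cca x y) ≤ dist ρ (P.cca x y') := P.cca_max x y' _ ⟨hq1, step1⟩
  have hle2 : dist ρ (P.cca x y') ≤ dist ρ (P.cca x y) := P.cca_max x y _ ⟨hq'1, step2⟩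
  exact P.tree.geoSeg_eq_of_dist hq'1 hq1 (le_antisymm hle2 hle1)

lemma u_locally_const (x : T) {y y' : T} (hy : y ∉ geoSeg P.root x)
    (hd : dist y y' < infDist y (geoSeg P.root x) / 2) :
    P.u (P.cca x y) y' = P.u (P.cca x y) y := by
  have hqS : P.cca x y ∈ geoSeg P.root x := (P.cca_spec x y).1
  have hr : 0 < infDist y (geoSeg P.root x) :=
    ((P.tree.isClosed_geoSeg P.root x).notMem_iff_infDist_pos
      ⟨x, self_mem_geoSeg_right _ _⟩).1 hy
  have hy' : y' ∉ geoSeg P.root x := P.not_mem_spine_near hy hd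
  have hyq : y ≠ P.cca x y := fun hh => hy (hh ▸ hqS)
  have hy'q : y' ≠ P.cca x y := fun hh => hy' (hh ▸ hqS)
  rw [P.u_eq_iff_geo hy'q hyq]
  intro hmem
  rw [mem_geoSeg_iff] at hmem
  have h1 : infDist y (geoSeg P.root x) ≤ dist y (P.cca x y) := infDist_le_dist_of_mem hqS
  have h2 : dist (P.cca x y) y ≤ dist y' y := by
    linarith [dist_nonneg (x := y') (y := P.cca x y)]
  rw [dist_comm (P.cca x y) y, dist_comm y' y] at h2
  linarith

/-- Off-spine sets defined through the projection and angle are open. -/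
lemma isOpen_offSpine (x : T) (Φ : T → ℝ → Prop) :
    IsOpen {y | y ∉ geoSeg P.root x ∧ Φ (P.cca x y) (P.u (P.cca x y) y)} := by
  rw [Metric.isOpen_iff]
  rintro y ⟨hy, hΦ⟩
  have hr : 0 < infDist y (geoSeg P.root x) :=
    ((P.tree.isClosed_geoSeg P.root x).notMem_iff_infDist_pos
      ⟨x, self_mem_geoSeg_right _ _⟩).1 hy
  refine ⟨infDist y (geoSeg P.root x) / 2, by positivity, ?_⟩
  intro y' hball
  rw [mem_ball] at hball
  have hd : dist y y' < infDist y (geoSeg P.root x) / 2 := by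
    rw [dist_comm]; exact hball
  have h1 : y' ∉ geoSeg P.root x := P.not_mem_spine_near hy hd
  have h2 : P.cca x y' = P.cca x y := P.cca_locally_const x hy hd
  have h3 : P.u (P.cca x y) y' = P.u (P.cca x y) y := P.u_locally_const x hy hd
  refine ⟨h1, ?_⟩
  rw [h2, h3]
  exact hΦ

/-- The front set `{y ≠ x : x ∈ [[ρ,y]], u x y = v}` is open. -/
lemma isOpen_front (x : T) (v : ℝ) :
    IsOpen {y | y ≠ x ∧ x ∈ geoSeg P.root y ∧ P.u x y = v} := by
  rw [Metric.isOpen_iff]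
  rintro y ⟨hyx, hmem, hval⟩
  refine ⟨dist x y / 2, half_pos (dist_pos.2 (fun hh => hyx hh.symm)), ?_⟩
  intro y' hball
  rw [mem_ball] at hball
  have hyy' : dist y y' < dist x y / 2 := by rw [dist_comm]; exact hball
  have hy'x : y' ≠ x := by
    intro hh
    rw [hh] at hball
    linarith [dist_nonneg (x := x) (y := y), dist_comm x y ▸ hball]
  have hngeo : x ∉ geoSeg y y' := by
    intro hg
    rw [mem_geoSeg_iff] at hg
    have : dist y x ≤ dist y y' := by linarith [dist_nonneg (x := x) (y := y')]
    rw [dist_comm y x] at this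
    linarith [dist_nonneg (x := x) (y := y)]
  have huv : P.u x y' = v := by
    rw [← hval]
    exact ((P.u_eq_iff_geo hyx hy'x).2 hngeo).symm
  refine ⟨hy'x, ?_, huv⟩
  by_cases hxρ : x = P.root
  · rw [mem_geoSeg_iff, ← hxρ, dist_self (α := T)]
    ring
  · have hρx : P.root ≠ x := fun hh => hxρ hh.symm
    have hyρ : y ∉ connectedComponentIn {x}ᶜ P.root := by
      rw [P.tree.connectedComponentIn_eq_side hρx]
      rintro ⟨-, hnm⟩
      exact hnm hmem
    have hy'cc : y' ∈ connectedComponentIn {x}ᶜ y := by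
      rw [P.tree.connectedComponentIn_eq_side hyx]
      exact ⟨hy'x, hngeo⟩
    by_contra hnmem
    have hy'ρ : y' ∈ connectedComponentIn {x}ᶜ P.root := by
      rw [P.tree.connectedComponentIn_eq_side hρx]
      exact ⟨hy'x, hnmem⟩
    apply hyρ
    rw [connectedComponentIn_eq hy'ρ, ← connectedComponentIn_eq hy'cc]
    exact mem_connectedComponentIn hyx

end PlaneRTree
namespace PlaneRTree

variable (P : PlaneRTree T)

lemma ang_fst (y : T) (w : ℝ) : P.ang y (y, w) = w := by
  simp [PlaneRTree.ang]

lemma ang_ne {q y : T} (h : q ≠ y) (w : ℝ) : P.ang q (y, w) = P.u q y := by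
  simp [PlaneRTree.ang, h]

lemma cca_ne_offspine {x y : T} (hy : y ∉ geoSeg P.root x) : P.cca x y ≠ y :=
  fun hh => hy (hh ▸ (P.cca_spec x y).1)

end PlaneRTree
end TreeHelpers
theorem leftOf_frontOf_sets_measurable {T : Type*} [MetricSpace T] (P : PlaneRTree T)
    (α : T × ℝ) (hα : α.2 ∈ Icc (0:ℝ) 1) :
    MeasurableSet[borel (T × ℝ)] {β : T × ℝ | β.2 ∈ Icc (0:ℝ) 1 ∧ P.leftOf β α} ∧
    MeasurableSet[borel (T × ℝ)] {β : T × ℝ | β.2 ∈ Icc (0:ℝ) 1 ∧ P.frontOf α β} ∧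
    MeasurableSet[borel (T × ℝ)] {β : T × ℝ | β.2 ∈ Icc (0:ℝ) 1 ∧ P.leftOf α β} := by
  classical
  haveI := P.sep
  letI : MeasurableSpace T := borel T
  haveI : BorelSpace T := ⟨rfl⟩
  letI : MeasurableSpace (T × ℝ) := borel (T × ℝ)
  haveI : BorelSpace (T × ℝ) := ⟨rfl⟩
  obtain ⟨x, v⟩ := α
  simp only [Icc, mem_setOf_eq] at hα ⊢
  set ρ := P.root with hρdef
  set S := geoSeg ρ x with hSdef
  set E := {y | y ∈ S ∧ y ≠ x ∧ P.u y x ≠ 1/2} with hEdef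
  have hEc : E.Countable := P.countable_bad x
  have hSclosed : IsClosed S := P.tree.isClosed_geoSeg _ _
  have hfst : Measurable (Prod.fst : T × ℝ → T) := continuous_fst.measurable
  have hsnd : Measurable (Prod.snd : T × ℝ → ℝ) := continuous_snd.measurable
  have hxS : x ∈ S := self_mem_geoSeg_right _ _
  -- spine values of cca
  have hccaS : ∀ y ∈ S, P.cca x y = y := fun y hy => P.cca_of_mem_spine hy
  have hmsing : ∀ z : T, MeasurableSet ({z} : Set T) := fun z =>
    (isClosed_singleton).measurableSet
  have hImeas : ∀ J : Set ℝ, MeasurableSet J →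
      MeasurableSet {β : T × ℝ | β.2 ∈ J} := fun J hJ => hsnd hJ
  -- the u = 1/2 fact off the bad set
  have huhalf : ∀ y ∈ S, y ≠ x → y ∉ E → P.u y x = 1/2 := by
    intro y hyS hyx hyE
    by_contra hne
    exact hyE ⟨hyS, hyx, hne⟩
  refine ⟨?_, ?_, ?_⟩
  -- ================== Goal 1 : {β | β ↷ α} ==================
  · have hset : {β : T × ℝ | (0 ≤ β.2 ∧ β.2 ≤ 1) ∧ P.leftOf β (x, v)} =
        (Prod.fst ⁻¹' {x} ∩ Prod.snd ⁻¹' (Icc 0 1 ∩ Iio v)) ∪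
        (Prod.fst ⁻¹' (S \ ({x} ∪ E)) ∩ Prod.snd ⁻¹' (Icc 0 1 ∩ Iio (1/2))) ∪
        (⋃ y ∈ E, Prod.fst ⁻¹' {y} ∩ Prod.snd ⁻¹' (Icc 0 1 ∩ Iio (P.u y x))) ∪
        (Prod.fst ⁻¹' {y | y ∉ S ∧ P.u (P.cca x y) y <
            (if P.cca x y = x then v else P.u (P.cca x y) x)} ∩ Prod.snd ⁻¹' (Icc 0 1)) := by
      ext ⟨y, w⟩
      simp only [mem_setOf_eq, mem_union, mem_inter_iff, mem_preimage, mem_singleton_iff,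
        mem_iUnion, mem_Icc, mem_Iio, mem_diff, mem_singleton_iff, exists_prop]
      have hcca : P.cca y x = P.cca x y := P.cca_comm y x
      constructor
      · rintro ⟨hw, hlt⟩
        have hlt' : P.ang (P.cca x y) (y, w) < P.ang (P.cca x y) (x, v) := by
          rw [← hcca]; exact hlt
        by_cases hyS : y ∈ S
        · rw [hccaS y hyS, P.ang_fst] at hlt'
          by_cases hyx : y = x
          · subst hyx
            rw [P.ang_fst] at hlt'
            exact Or.inl (Or.inl (Or.inl ⟨rfl, hw, hlt'⟩))
          · rw [P.ang_ne hyx] at hlt'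
            by_cases hyE : y ∈ E
            · exact Or.inl (Or.inr ⟨y, hyE, rfl, hw, hlt'⟩)
            · rw [huhalf y hyS hyx hyE] at hlt'
              exact Or.inl (Or.inl (Or.inr ⟨⟨hyS, fun hh => hh.elim hyx hyE⟩, hw, hlt'⟩))
        · have hne := P.cca_ne_offspine hyS
          rw [P.ang_ne hne] at hlt'
          refine Or.inr ⟨⟨hyS, ?_⟩, hw⟩
          by_cases hcx : P.cca x y = x
          · rw [if_pos hcx, hcx]
            rw [hcx, P.ang_fst] at hlt'
            exact hlt'
          · rw [if_neg hcx]
            rw [P.ang_ne (fun hh => hcx hh)] at hlt'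
            exact hlt'
      · intro hmem
        rcases hmem with (((⟨rfl, hw, hv⟩ | ⟨⟨hyS, hyxE⟩, hw, hhalf⟩) | ⟨y', hy'E, rfl, hw, hu⟩) |
            ⟨⟨hyS, hΦ⟩, hw⟩)
        · refine ⟨hw, ?_⟩
          show P.ang (P.cca y y) (y, w) < P.ang (P.cca y y) (y, v)
          rw [hccaS y hxS, P.ang_fst, P.ang_fst]
          exact hv
        · have hyx : y ≠ x := fun hh => hyxE (Or.inl hh)
          have hyE : y ∉ E := fun hh => hyxE (Or.inr hh)
          refine ⟨hw, ?_⟩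
          show P.ang (P.cca y x) (y, w) < P.ang (P.cca y x) (x, v)
          rw [hcca, hccaS y hyS, P.ang_fst, P.ang_ne hyx, huhalf y hyS hyx hyE]
          exact hhalf
        · have hy'S : y ∈ S := hy'E.1
          have hy'x : y ≠ x := hy'E.2.1
          refine ⟨hw, ?_⟩
          show P.ang (P.cca y x) (y, w) < P.ang (P.cca y x) (x, v)
          rw [hcca, hccaS y hy'S, P.ang_fst, P.ang_ne hy'x]
          exact hu
        · refine ⟨hw, ?_⟩
          show P.ang (P.cca y x) (y, w) < P.ang (P.cca y x) (x, v)
          have hne := P.cca_ne_offspine hyS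
          rw [hcca, P.ang_ne hne]
          by_cases hcx : P.cca x y = x
          · rw [hcx, P.ang_fst]
            rw [if_pos hcx, hcx] at hΦ
            exact hΦ
          · rw [P.ang_ne hcx]
            rw [if_neg hcx] at hΦ
            exact hΦ
    rw [hset]
    refine MeasurableSet.union (MeasurableSet.union (MeasurableSet.union ?_ ?_) ?_) ?_
    · exact (hfst (hmsing x)).inter (hsnd (measurableSet_Icc.inter measurableSet_Iio))
    · refine (hfst ?_).inter (hsnd (measurableSet_Icc.inter measurableSet_Iio))
      exact hSclosed.measurableSet.diff ((hmsing x).union hEc.measurableSet)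
    · refine MeasurableSet.biUnion hEc (fun y _ => ?_)
      exact (hfst (hmsing y)).inter (hsnd (measurableSet_Icc.inter measurableSet_Iio))
    · refine (hfst ?_).inter (hsnd measurableSet_Icc)
      refine IsOpen.measurableSet ?_
      exact P.isOpen_offSpine x (fun q t => t < (if q = x then v else P.u q x))
  -- ================== Goal 2 : {β | α → β} ==================
  · have hset : {β : T × ℝ | (0 ≤ β.2 ∧ β.2 ≤ 1) ∧ P.frontOf (x, v) β} =
        (Prod.fst ⁻¹' {x} ∩ Prod.snd ⁻¹' (Icc 0 1 ∩ {v})) ∪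
        (Prod.fst ⁻¹' {y | y ≠ x ∧ x ∈ geoSeg ρ y ∧ P.u x y = v} ∩
          Prod.snd ⁻¹' (Icc 0 1)) := by
      ext ⟨y, w⟩
      simp only [mem_setOf_eq, mem_union, mem_inter_iff, mem_preimage, mem_singleton_iff,
        mem_Icc, mem_inter_iff]
      constructor
      · rintro ⟨hw, hg, hang⟩
        by_cases hyx : y = x
        · subst hyx
          rw [P.ang_fst] at hang
          exact Or.inl ⟨rfl, hw, hang⟩
        · rw [P.ang_ne (fun hh => hyx hh.symm)] at hang
          exact Or.inr ⟨⟨hyx, hg, hang⟩, hw⟩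
      · rintro (⟨rfl, hw, hv⟩ | ⟨⟨hyx, hg, hu⟩, hw⟩)
        · refine ⟨hw, ?_, ?_⟩
          · exact self_mem_geoSeg_right _ _
          · show P.ang y (y, w) = v
            rw [P.ang_fst]
            exact hv
        · refine ⟨hw, hg, ?_⟩
          show P.ang x (y, w) = v
          rw [P.ang_ne (fun hh => hyx hh.symm)]
          exact hu
    rw [hset]
    refine MeasurableSet.union ?_ ?_
    · exact (hfst (hmsing x)).inter (hsnd (measurableSet_Icc.inter (measurableSet_singleton v)))
    · exact (hfst (P.isOpen_front x v).measurableSet).inter (hsnd measurableSet_Icc)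
  -- ================== Goal 3 : {β | α ↷ β} ==================
  · have hset : {β : T × ℝ | (0 ≤ β.2 ∧ β.2 ≤ 1) ∧ P.leftOf (x, v) β} =
        (Prod.fst ⁻¹' {x} ∩ Prod.snd ⁻¹' (Icc 0 1 ∩ Ioi v)) ∪
        (Prod.fst ⁻¹' (S \ ({x} ∪ E)) ∩ Prod.snd ⁻¹' (Icc 0 1 ∩ Ioi (1/2))) ∪
        (⋃ y ∈ E, Prod.fst ⁻¹' {y} ∩ Prod.snd ⁻¹' (Icc 0 1 ∩ Ioi (P.u y x))) ∪
        (Prod.fst ⁻¹' {y | y ∉ S ∧ (if P.cca x y = x then v else P.u (P.cca x y) x) <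
            P.u (P.cca x y) y} ∩ Prod.snd ⁻¹' (Icc 0 1)) := by
      ext ⟨y, w⟩
      simp only [mem_setOf_eq, mem_union, mem_inter_iff, mem_preimage, mem_singleton_iff,
        mem_iUnion, mem_Icc, mem_Ioi, mem_diff, mem_singleton_iff, exists_prop]
      constructor
      · rintro ⟨hw, hlt⟩
        have hlt' : P.ang (P.cca x y) (x, v) < P.ang (P.cca x y) (y, w) := hlt
        by_cases hyS : y ∈ S
        · rw [hccaS y hyS, P.ang_fst] at hlt'
          by_cases hyx : y = x
          · subst hyx
            rw [P.ang_fst] at hlt'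
            exact Or.inl (Or.inl (Or.inl ⟨rfl, hw, hlt'⟩))
          · rw [P.ang_ne hyx] at hlt'
            by_cases hyE : y ∈ E
            · exact Or.inl (Or.inr ⟨y, hyE, rfl, hw, hlt'⟩)
            · rw [huhalf y hyS hyx hyE] at hlt'
              exact Or.inl (Or.inl (Or.inr ⟨⟨hyS, fun hh => hh.elim hyx hyE⟩, hw, hlt'⟩))
        · have hne := P.cca_ne_offspine hyS
          rw [P.ang_ne hne] at hlt'
          refine Or.inr ⟨⟨hyS, ?_⟩, hw⟩
          by_cases hcx : P.cca x y = x
          · rw [if_pos hcx, hcx]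
            rw [hcx, P.ang_fst] at hlt'
            exact hlt'
          · rw [if_neg hcx]
            rw [P.ang_ne (fun hh => hcx hh)] at hlt'
            exact hlt'
      · intro hmem
        rcases hmem with (((⟨rfl, hw, hv⟩ | ⟨⟨hyS, hyxE⟩, hw, hhalf⟩) | ⟨y', hy'E, rfl, hw, hu⟩) |
            ⟨⟨hyS, hΦ⟩, hw⟩)
        · refine ⟨hw, ?_⟩
          show P.ang (P.cca y y) (y, v) < P.ang (P.cca y y) (y, w)
          rw [hccaS y hxS, P.ang_fst, P.ang_fst]
          exact hv
        · have hyx : y ≠ x := fun hh => hyxE (Or.inl hh)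
          have hyE : y ∉ E := fun hh => hyxE (Or.inr hh)
          refine ⟨hw, ?_⟩
          show P.ang (P.cca x y) (x, v) < P.ang (P.cca x y) (y, w)
          rw [hccaS y hyS, P.ang_fst, P.ang_ne hyx, huhalf y hyS hyx hyE]
          exact hhalf
        · have hy'S : y ∈ S := hy'E.1
          have hy'x : y ≠ x := hy'E.2.1
          refine ⟨hw, ?_⟩
          show P.ang (P.cca x y) (x, v) < P.ang (P.cca x y) (y, w)
          rw [hccaS y hy'S, P.ang_fst, P.ang_ne hy'x]
          exact hu
        · refine ⟨hw, ?_⟩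
          show P.ang (P.cca x y) (x, v) < P.ang (P.cca x y) (y, w)
          have hne := P.cca_ne_offspine hyS
          rw [P.ang_ne hne]
          by_cases hcx : P.cca x y = x
          · rw [hcx, P.ang_fst]
            rw [if_pos hcx, hcx] at hΦ
            exact hΦ
          · rw [P.ang_ne hcx]
            rw [if_neg hcx] at hΦ
            exact hΦ
    rw [hset]
    refine MeasurableSet.union (MeasurableSet.union (MeasurableSet.union ?_ ?_) ?_) ?_
    · exact (hfst (hmsing x)).inter (hsnd (measurableSet_Icc.inter measurableSet_Ioi))
    · refine (hfst ?_).inter (hsnd (measurableSet_Icc.inter measurableSet_Ioi))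
      exact hSclosed.measurableSet.diff ((hmsing x).union hEc.measurableSet)
    · refine MeasurableSet.biUnion hEc (fun y _ => ?_)
      exact (hfst (hmsing y)).inter (hsnd (measurableSet_Icc.inter measurableSet_Ioi))
    · refine (hfst ?_).inter (hsnd measurableSet_Icc)
      refine IsOpen.measurableSet ?_
      exact P.isOpen_offSpine x (fun q t => (if q = x then v else P.u q x) < t)
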